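/- For a partition λ and a box s with s+(1,1) ∈ R⁺_λ (i.e., s is a removable box of λ), one has Σ_{q ∈ A_λ} ℏ·τ_λ^q / ([s-q]·[s-q+(1,1)]) = τ_{λ-s}^s, where ℏ = -ε₁ε₂, τ are Kerov's co-transition measures, and A_λ is the set of addable boxes of λ. -/

import Mathlib

noncomputable section

/-- The coefficient field `ℂ(ε₁,ε₂)`, realized as the fraction field of a polynomial
ring in two (transcendental) variables. -/
abbrev Kf : Type := FractionRing (MvPolynomial (Fin 2) ℚ)

/-- The equivariant parameter `ε₁`. -/
def eps1 : Kf := algebraMap (MvPolynomial (Fin 2) ℚ) Kf (MvPolynomial.X 0)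

/-- The equivariant parameter `ε₂`. -/
def eps2 : Kf := algebraMap (MvPolynomial (Fin 2) ℚ) Kf (MvPolynomial.X 1)

/-- The content `[b] = b₁ε₁ + b₂ε₂` of a box `b`. -/
def content (b : ℕ × ℕ) : Kf := (b.1 : Kf) * eps1 + (b.2 : Kf) * eps2

/-- The set `A_Y` of addable boxes (inner corners) of a Young diagram `Y`. -/
def addables (Y : YoungDiagram) : Finset (ℕ × ℕ) :=
  ((Finset.range (Y.cells.card + 1)) ×ˢ (Finset.range (Y.cells.card + 1))).filter
    (fun c => c ∉ Y.cells ∧ (c.1 = 0 ∨ (c.1 - 1, c.2) ∈ Y.cells) ∧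
      (c.2 = 0 ∨ (c.1, c.2 - 1) ∈ Y.cells))

/-- The set `R_Y` of removable boxes of a Young diagram `Y`. -/
def removables (Y : YoungDiagram) : Finset (ℕ × ℕ) :=
  Y.cells.filter fun c => (c.1 + 1, c.2) ∉ Y.cells ∧ (c.1, c.2 + 1) ∉ Y.cells

/-- The set `R⁺_Y = {t + (1,1) : t ∈ R_Y}` of outer corners of `Y`. -/
def outers (Y : YoungDiagram) : Finset (ℕ × ℕ) :=
  (removables Y).image fun c => (c.1 + 1, c.2 + 1)

/-- Kerov's co-transition measure
`τ_Y^a = ∏_{t∈R⁺_Y}[a-t] / ∏_{a'∈A_Y, a'≠a}[a-a']` at an addable box `a`. -/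
def tau (Y : YoungDiagram) (a : ℕ × ℕ) : Kf :=
  (∏ t ∈ outers Y, (content a - content t)) /
    ∏ a' ∈ (addables Y).erase a, (content a - content a')

/-- The quantum parameter `ℏ = -ε₁ε₂`. -/
def hbar : Kf := -eps1 * eps2

open Finset

/-! ### Auxiliary lemmas -/

open MvPolynomial in
lemma eps_indep (a b c d : ℕ)
    (h : (a : Kf) * eps1 + (b : Kf) * eps2 = (c : Kf) * eps1 + (d : Kf) * eps2) :
    a = c ∧ b = d := by
  have hinj := IsFractionRing.injective (MvPolynomial (Fin 2) ℚ) Kf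
  have h2 : (C (a:ℚ) * X 0 + C (b:ℚ) * X 1 : MvPolynomial (Fin 2) ℚ)
      = C (c:ℚ) * X 0 + C (d:ℚ) * X 1 := by
    apply hinj
    simpa [eps1, eps2, map_add, map_mul, map_natCast] using h
  have hc0 := congrArg (coeff (Finsupp.single (0 : Fin 2) 1)) h2
  have hc1 := congrArg (coeff (Finsupp.single (1 : Fin 2) 1)) h2
  rw [coeff_add, coeff_add, coeff_C_mul, coeff_C_mul, coeff_C_mul, coeff_C_mul,
    coeff_X', coeff_X', if_pos rfl, if_neg (by simp [Finsupp.single_eq_single_iff])] at hc0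
  rw [coeff_add, coeff_add, coeff_C_mul, coeff_C_mul, coeff_C_mul, coeff_C_mul,
    coeff_X', coeff_X', if_pos rfl, if_neg (by simp [Finsupp.single_eq_single_iff])] at hc1
  simp at hc0 hc1
  exact ⟨by exact_mod_cast hc0, by exact_mod_cast hc1⟩

lemma content_inj {a b : ℕ × ℕ} (h : content a = content b) : a = b := by
  obtain ⟨h1, h2⟩ := eps_indep a.1 a.2 b.1 b.2 h
  exact Prod.ext h1 h2

lemma content_sub_ne {a b : ℕ × ℕ} (h : a ≠ b) : content a - content b ≠ 0 :=
  sub_ne_zero_of_ne fun hc => h (content_inj hc)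

lemma eps_sum_ne : eps1 + eps2 ≠ 0 := by
  intro h
  have : ((1:ℕ) : Kf) * eps1 + ((1:ℕ) : Kf) * eps2 = ((0:ℕ) : Kf) * eps1 + ((0:ℕ) : Kf) * eps2 := by
    push_cast
    rw [one_mul, one_mul, zero_mul, zero_mul, add_zero]
    exact h
  exact absurd (eps_indep 1 1 0 0 this).1 one_ne_zero

lemma content_succ (p : ℕ × ℕ) : content (p.1 + 1, p.2 + 1) = content p + eps1 + eps2 := by
  simp only [content]
  push_cast
  ring

lemma content_right (p : ℕ × ℕ) : content (p.1, p.2 + 1) = content p + eps2 := by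
  simp only [content]
  push_cast
  ring

lemma content_down (p : ℕ × ℕ) : content (p.1 + 1, p.2) = content p + eps1 := by
  simp only [content]
  push_cast
  ring

lemma content_right' (i j : ℕ) : content (i, j + 1) = content (i, j) + eps2 := by
  simp only [content]
  push_cast
  ring

lemma content_down' (i j : ℕ) : content (i + 1, j) = content (i, j) + eps1 := by
  simp only [content]
  push_cast
  ring

/-! ### Membership characterizations -/

lemma mem_addables_iff {Y : YoungDiagram} {a : ℕ × ℕ} :
    a ∈ addables Y ↔ a ∉ Y.cells ∧ (a.1 = 0 ∨ (a.1 - 1, a.2) ∈ Y.cells) ∧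
      (a.2 = 0 ∨ (a.1, a.2 - 1) ∈ Y.cells) := by
  constructor
  · intro h
    exact (Finset.mem_filter.mp h).2
  · intro h
    refine Finset.mem_filter.mpr ⟨?_, h⟩
    rw [Finset.mem_product, Finset.mem_range, Finset.mem_range]
    constructor
    · rcases h.2.1 with h0 | hup
      · omega
      · have hmem : ∀ r ∈ Finset.range a.1, (r, a.2) ∈ Y.cells := by
          intro r hr
          rw [Finset.mem_range] at hr
          rw [YoungDiagram.mem_cells] at hup ⊢
          exact Y.up_left_mem (by omega) le_rfl hup
        have hcard := Finset.card_le_card_of_injOn (fun r => (r, a.2)) hmem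
          (fun x _ y _ hxy => by simpa using congrArg Prod.fst hxy)
        simp only [Finset.card_range] at hcard
        omega
    · rcases h.2.2 with h0 | hleft
      · omega
      · have hmem : ∀ r ∈ Finset.range a.2, (a.1, r) ∈ Y.cells := by
          intro r hr
          rw [Finset.mem_range] at hr
          rw [YoungDiagram.mem_cells] at hleft ⊢
          exact Y.up_left_mem le_rfl (by omega) hleft
        have hcard := Finset.card_le_card_of_injOn (fun r => (a.1, r)) hmem
          (fun x _ y _ hxy => by simpa using congrArg Prod.snd hxy)
        simp only [Finset.card_range] at hcard
        omega

lemma mem_removables_iff {Y : YoungDiagram} {r : ℕ × ℕ} :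
    r ∈ removables Y ↔ r ∈ Y.cells ∧ (r.1 + 1, r.2) ∉ Y.cells ∧ (r.1, r.2 + 1) ∉ Y.cells := by
  simp [removables, Finset.mem_filter]

/-! ### Cardinality: strictly more addables than removables -/

lemma card_outers_lt (Y : YoungDiagram) : (outers Y).card < (addables Y).card := by
  have himg : (outers Y).card = (removables Y).card :=
    Finset.card_image_of_injective _ (fun a b h => by
      have h1 := congrArg Prod.fst h
      have h2 := congrArg Prod.snd h
      simp at h1 h2
      exact Prod.ext h1 h2)
  rw [himg]
  have h0 : (0, Y.rowLen 0) ∈ addables Y := by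
    rw [mem_addables_iff]
    refine ⟨?_, Or.inl rfl, ?_⟩
    · rw [YoungDiagram.mem_cells, YoungDiagram.mem_iff_lt_rowLen]
      omega
    · rcases Nat.eq_zero_or_pos (Y.rowLen 0) with h | h
      · exact Or.inl h
      · exact Or.inr (by
          rw [YoungDiagram.mem_cells]
          simp only [YoungDiagram.mem_iff_lt_rowLen]
          simp
          omega)
  have hsub : ∀ r ∈ removables Y, (r.1 + 1, Y.rowLen (r.1 + 1)) ∈ (addables Y).erase (0, Y.rowLen 0) := by
    intro r hr
    rw [mem_removables_iff] at hr
    have hr2 : r.2 < Y.rowLen r.1 := by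
      rw [← YoungDiagram.mem_iff_lt_rowLen, ← YoungDiagram.mem_cells]
      exact hr.1
    have hr3 : Y.rowLen (r.1 + 1) ≤ r.2 := by
      by_contra hc
      exact hr.2.1 (by
        rw [YoungDiagram.mem_cells, YoungDiagram.mem_iff_lt_rowLen]
        omega)
    refine Finset.mem_erase.mpr ⟨by simp, ?_⟩
    rw [mem_addables_iff]
    refine ⟨?_, Or.inr ?_, ?_⟩
    · rw [YoungDiagram.mem_cells, YoungDiagram.mem_iff_lt_rowLen]
      omega
    · rw [YoungDiagram.mem_cells]
      simp only [Nat.add_sub_cancel]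
      rw [YoungDiagram.mem_iff_lt_rowLen]
      omega
    · rcases Nat.eq_zero_or_pos (Y.rowLen (r.1 + 1)) with h | h
      · exact Or.inl h
      · exact Or.inr (by
          rw [YoungDiagram.mem_cells]
          simp only [YoungDiagram.mem_iff_lt_rowLen]
          simp
          omega)
  have hinj : Set.InjOn (fun r : ℕ × ℕ => (r.1 + 1, Y.rowLen (r.1 + 1))) (removables Y) := by
    intro r hr r' hr' h
    simp only [Finset.coe_sort_coe, Prod.mk.injEq] at h
    rw [Finset.mem_coe, mem_removables_iff] at hr hr'
    have h1 : r.1 = r'.1 := by omega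
    have hv : ∀ u : ℕ × ℕ, u ∈ Y.cells → (u.1, u.2 + 1) ∉ Y.cells → u.2 + 1 = Y.rowLen u.1 := by
      intro u hu hu2
      have hu' : u.2 < Y.rowLen u.1 := by
        rw [← YoungDiagram.mem_iff_lt_rowLen, ← YoungDiagram.mem_cells]
        exact hu
      have hu2' : ¬ (u.2 + 1 < Y.rowLen u.1) := by
        intro hc
        exact hu2 (by
          rw [YoungDiagram.mem_cells, YoungDiagram.mem_iff_lt_rowLen]
          exact hc)
      omega
    have e1 := hv r hr.1 hr.2.2
    have e2 := hv r' hr'.1 hr'.2.2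
    rw [h1] at e1
    exact Prod.ext h1 (by omega)
  have hle := Finset.card_le_card_of_injOn _ hsub hinj
  have hpos : 0 < (addables Y).card := Finset.card_pos.mpr ⟨_, h0⟩
  rw [Finset.card_erase_of_mem h0] at hle
  omega

/-! ### Partial fractions via Lagrange interpolation -/

lemma sum_tau_div (Y : YoungDiagram) (z : Kf) (hz : ∀ a ∈ addables Y, z ≠ content a) :
    ∑ q ∈ addables Y, tau Y q / (z - content q) =
      (∏ t ∈ outers Y, (z - content t)) / ∏ a ∈ addables Y, (z - content a) := by
  classical
  have hinj : Set.InjOn content (addables Y : Set (ℕ × ℕ)) := fun a _ b _ h => content_inj h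
  set f : Polynomial Kf := ∏ t ∈ outers Y, (Polynomial.X - Polynomial.C (content t)) with hf
  have hdeg : f.degree < ((addables Y).card : WithBot ℕ) := by
    rw [hf, Polynomial.degree_prod]
    simp only [Polynomial.degree_X_sub_C]
    rw [Finset.sum_const, nsmul_eq_mul, mul_one]
    exact_mod_cast card_outers_lt Y
  have hinterp := Lagrange.eq_interpolate (f := f) hinj hdeg
  have heval := Lagrange.eval_interpolate_not_at_node (s := addables Y) (v := content)
      (fun q => Polynomial.eval (content q) f) (x := z) hz
  rw [← hinterp, Lagrange.eval_nodal] at heval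
  have hfz : Polynomial.eval z f = ∏ t ∈ outers Y, (z - content t) := by
    rw [hf, Polynomial.eval_prod]
    simp
  rw [hfz] at heval
  have hprod_ne : (∏ a ∈ addables Y, (z - content a)) ≠ 0 :=
    Finset.prod_ne_zero_iff.mpr fun a ha => sub_ne_zero_of_ne (hz a ha)
  rw [heval, mul_div_cancel_left₀ _ hprod_ne]
  refine Finset.sum_congr rfl fun q hq => ?_
  have h1 : Polynomial.eval (content q) f = ∏ t ∈ outers Y, (content q - content t) := by
    rw [hf, Polynomial.eval_prod]
    simp
  simp only [tau, Lagrange.nodalWeight, h1]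
  rw [Finset.prod_inv_distrib, div_eq_mul_inv, div_eq_mul_inv]
  ring

/-! ### Combinatorics of removing a box -/

section Removal

variable {Y Y' : YoungDiagram} {s : ℕ × ℕ}
  (hs : s ∈ removables Y) (hY' : Y'.cells = Y.cells.erase s)

include hs hY'

lemma mem_addables' (a : ℕ × ℕ) :
    a ∈ addables Y' ↔
      (a ∈ addables Y ∧ a ≠ (s.1 + 1, s.2) ∧ a ≠ (s.1, s.2 + 1)) ∨ a = s := by
  rw [mem_removables_iff] at hs
  obtain ⟨hsY, hs1, hs2⟩ := hs
  rw [mem_addables_iff, mem_addables_iff]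
  simp only [hY', Finset.mem_erase]
  constructor
  · rintro ⟨hnot, hup, hleft⟩
    by_cases has : a = s
    · exact Or.inr has
    · left
      have haY : a ∉ Y.cells := fun h => hnot ⟨has, h⟩
      refine ⟨⟨haY, ?_, ?_⟩, ?_, ?_⟩
      · rcases hup with h | h
        · exact Or.inl h
        · exact Or.inr h.2
      · rcases hleft with h | h
        · exact Or.inl h
        · exact Or.inr h.2
      · intro hc
        have hc' : a.1 = s.1 + 1 ∧ a.2 = s.2 := by
          rw [Prod.ext_iff] at hc
          simpa using hc
        rcases hup with h | h
        · omega
        · exact h.1 (Prod.ext (by simp; omega) (by simp; omega))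
      · intro hc
        have hc' : a.1 = s.1 ∧ a.2 = s.2 + 1 := by
          rw [Prod.ext_iff] at hc
          simpa using hc
        rcases hleft with h | h
        · omega
        · exact h.1 (Prod.ext (by simp; omega) (by simp; omega))
  · rintro (⟨⟨haY, hup, hleft⟩, he1, he2⟩ | rfl)
    · refine ⟨fun h => haY h.2, ?_, ?_⟩
      · rcases hup with h | h
        · exact Or.inl h
        · refine Or.inr ⟨?_, h⟩
          intro hc
          have hc' : a.1 - 1 = s.1 ∧ a.2 = s.2 := by
            rw [Prod.ext_iff] at hc
            simpa using hc
          by_cases ha1 : a.1 = 0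
          · have ha : a = (a.1 - 1, a.2) := Prod.ext (by simp; omega) (by simp)
            exact haY (by rw [ha]; exact h)
          · exact he1 (Prod.ext (by simp; omega) (by simp; omega))
      · rcases hleft with h | h
        · exact Or.inl h
        · refine Or.inr ⟨?_, h⟩
          intro hc
          have hc' : a.1 = s.1 ∧ a.2 - 1 = s.2 := by
            rw [Prod.ext_iff] at hc
            simpa using hc
          by_cases ha2 : a.2 = 0
          · have ha : a = (a.1, a.2 - 1) := Prod.ext (by simp) (by simp; omega)
            exact haY (by rw [ha]; exact h)
          · exact he2 (Prod.ext (by simp; omega) (by simp; omega))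
    · refine ⟨fun h => h.1 rfl, ?_, ?_⟩
      · rcases Nat.eq_zero_or_pos a.1 with h | h
        · exact Or.inl h
        · refine Or.inr ⟨?_, ?_⟩
          · intro hc
            have := congrArg Prod.fst hc
            simp at this
            omega
          · rw [YoungDiagram.mem_cells] at hsY ⊢
            exact Y.up_left_mem (by omega) le_rfl hsY
      · rcases Nat.eq_zero_or_pos a.2 with h | h
        · exact Or.inl h
        · refine Or.inr ⟨?_, ?_⟩
          · intro hc
            have := congrArg Prod.snd hc
            simp at this
            omega
          · rw [YoungDiagram.mem_cells] at hsY ⊢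
            exact Y.up_left_mem le_rfl (by omega) hsY

lemma mem_removables' (r : ℕ × ℕ) :
    r ∈ removables Y' ↔
      (r ∈ removables Y ∧ r ≠ s) ∨
      (0 < s.2 ∧ r = (s.1, s.2 - 1) ∧ (s.1 + 1, s.2 - 1) ∉ Y.cells) ∨
      (0 < s.1 ∧ r = (s.1 - 1, s.2) ∧ (s.1 - 1, s.2 + 1) ∉ Y.cells) := by
  have hsm := hs
  rw [mem_removables_iff] at hsm
  obtain ⟨hsY, hs1, hs2⟩ := hsm
  rw [mem_removables_iff, mem_removables_iff]
  simp only [hY', Finset.mem_erase]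
  constructor
  · rintro ⟨⟨hrs, hrY⟩, hA, hB⟩
    by_cases hA' : (r.1 + 1, r.2) = s
    · right; right
      have hh : r.1 + 1 = s.1 ∧ r.2 = s.2 := by
        rw [Prod.ext_iff] at hA'
        simpa using hA'
      obtain ⟨h1, h2⟩ := hh
      refine ⟨by omega, by exact Prod.ext (by omega) (by omega), ?_⟩
      have : (r.1, r.2 + 1) ∉ Y.cells := by
        intro hc
        apply hB
        refine ⟨?_, hc⟩
        intro hc2
        have := congrArg Prod.fst hc2
        simp at this
        omega
      have e1 : s.1 - 1 = r.1 := by omega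
      have e2 : s.2 + 1 = r.2 + 1 := by omega
      rw [e1, e2]
      exact this
    · by_cases hB' : (r.1, r.2 + 1) = s
      · right; left
        have hh : r.1 = s.1 ∧ r.2 + 1 = s.2 := by
          rw [Prod.ext_iff] at hB'
          simpa using hB'
        obtain ⟨h1, h2⟩ := hh
        refine ⟨by omega, by exact Prod.ext (by omega) (by omega), ?_⟩
        have : (r.1 + 1, r.2) ∉ Y.cells := by
          intro hc
          exact hA ⟨hA', hc⟩
        have e1 : s.1 + 1 = r.1 + 1 := by omega
        have e2 : s.2 - 1 = r.2 := by omega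
        rw [e1, e2]
        exact this
      · left
        refine ⟨⟨hrY, ?_, ?_⟩, hrs⟩
        · intro hc
          exact hA ⟨hA', hc⟩
        · intro hc
          exact hB ⟨hB', hc⟩
  · rintro (⟨⟨hrY, hr1, hr2⟩, hrs⟩ | ⟨hj, rfl, hnew⟩ | ⟨hi, rfl, hnew⟩)
    · exact ⟨⟨hrs, hrY⟩, fun h => hr1 h.2, fun h => hr2 h.2⟩
    · refine ⟨⟨?_, ?_⟩, ?_, ?_⟩
      · intro hc
        have := congrArg Prod.snd hc
        simp at this
        omega
      · rw [YoungDiagram.mem_cells] at hsY ⊢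
        exact Y.up_left_mem le_rfl (by omega) hsY
      · simp only
        rintro ⟨h1, h2⟩
        exact hnew h2
      · simp only
        rintro ⟨h1, h2⟩
        apply h1
        exact Prod.ext rfl (by omega)
    · refine ⟨⟨?_, ?_⟩, ?_, ?_⟩
      · intro hc
        have := congrArg Prod.fst hc
        simp at this
        omega
      · rw [YoungDiagram.mem_cells] at hsY ⊢
        exact Y.up_left_mem (by omega) le_rfl hsY
      · simp only
        rintro ⟨h1, h2⟩
        apply h1
        exact Prod.ext (by omega) rfl
      · simp only
        rintro ⟨h1, h2⟩
        exact hnew h2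

end Removal

set_option maxHeartbeats 2000000 in
/-- for a partition `λ` and a removable box `s` of `λ` (i.e.
`s+(1,1) ∈ R⁺_λ`), one has
`Σ_{q ∈ A_λ} ℏ·τ_λ^q / ([s-q]·[s-q+(1,1)]) = τ_{λ-s}^s`, where `λ-s` is `λ` with the
box `s` removed (so that `s ∈ A_{λ-s}`). -/
theorem tau_sum_identity (Y Y' : YoungDiagram) (s : ℕ × ℕ)
    (hs : s ∈ removables Y) (hY' : Y'.cells = Y.cells.erase s) :
    ∑ q ∈ addables Y,
        hbar * tau Y q /
          ((content s - content q) * (content s - content q + eps1 + eps2)) =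
      tau Y' s := by
  classical
  obtain ⟨hsY, hd1, hd2⟩ := mem_removables_iff.mp hs
  have hεs := eps_sum_ne
  have hsA : s ∉ addables Y := fun h => (mem_addables_iff.mp h).1 hsY
  have hoA : (s.1 + 1, s.2 + 1) ∉ addables Y := by
    intro h
    rcases (mem_addables_iff.mp h).2.1 with h0 | hup
    · simp at h0
    · simp only [Nat.add_sub_cancel] at hup
      exact hd2 hup
  have hz1 : ∀ a ∈ addables Y, content s ≠ content a := by
    intro a ha hc'
    exact hsA ((content_inj hc'.symm) ▸ ha)
  have hz2 : ∀ a ∈ addables Y, content s + eps1 + eps2 ≠ content a := by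
    intro a ha hc'
    have h2 : content (s.1 + 1, s.2 + 1) = content a := by
      rw [content_succ]
      exact hc'
    exact hoA ((content_inj h2) ▸ ha)
  have hterm : ∀ q ∈ addables Y,
      hbar * tau Y q / ((content s - content q) * (content s - content q + eps1 + eps2))
        = hbar / (eps1 + eps2) * (tau Y q / (content s - content q))
          - hbar / (eps1 + eps2) * (tau Y q / ((content s + eps1 + eps2) - content q)) := by
    intro q hq
    have h1 : content s - content q ≠ 0 := sub_ne_zero_of_ne (hz1 q hq)
    have h2 : (content s + eps1 + eps2) - content q ≠ 0 := sub_ne_zero_of_ne (hz2 q hq)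
    have h3 : content s - content q + eps1 + eps2 = (content s + eps1 + eps2) - content q := by
      ring
    rw [h3]
    field_simp
    ring
  rw [Finset.sum_congr rfl hterm, Finset.sum_sub_distrib, ← Finset.mul_sum, ← Finset.mul_sum,
    sum_tau_div Y (content s) hz1, sum_tau_div Y (content s + eps1 + eps2) hz2]
  have hmem_out : (s.1 + 1, s.2 + 1) ∈ outers Y := Finset.mem_image_of_mem _ hs
  have hzero : (∏ t ∈ outers Y, ((content s + eps1 + eps2) - content t)) = 0 :=
    Finset.prod_eq_zero hmem_out (by rw [content_succ]; ring)
  rw [hzero, zero_div, mul_zero, sub_zero]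
  -- Notation for the two special boxes
  set E : Finset (ℕ × ℕ) := {(s.1 + 1, s.2), (s.1, s.2 + 1)} with hE
  have hE12 : ((s.1 + 1, s.2) : ℕ × ℕ) ≠ (s.1, s.2 + 1) := by
    intro h
    rw [Prod.ext_iff] at h
    simp at h
  -- the erased addables of Y'
  have herase : (addables Y').erase s = addables Y \ E := by
    ext a
    rw [Finset.mem_erase, mem_addables' hs hY' a, Finset.mem_sdiff, hE, Finset.mem_insert,
      Finset.mem_singleton]
    constructor
    · rintro ⟨hns, ⟨hA, h1, h2⟩ | rfl⟩
      · exact ⟨hA, by tauto⟩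
      · exact absurd rfl hns
    · rintro ⟨hA, hne⟩
      exact ⟨fun h => hsA (h ▸ hA), Or.inl ⟨hA, fun h => hne (Or.inl h), fun h => hne (Or.inr h)⟩⟩
  have hsplit : (∏ a ∈ addables Y \ E, (content s - content a))
      * (∏ a ∈ addables Y ∩ E, (content s - content a))
      = ∏ a ∈ addables Y, (content s - content a) := by
    have h := Finset.prod_sdiff (f := fun a => content s - content a)
      (Finset.inter_subset_left (s₁ := addables Y) (s₂ := E))
    rwa [Finset.sdiff_inter_self_left] at h
  have hout : ∀ Z : YoungDiagram, (∏ t ∈ outers Z, (content s - content t))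
      = ∏ r ∈ removables Z, (content s - content r - (eps1 + eps2)) := by
    intro Z
    rw [outers, Finset.prod_image]
    · refine Finset.prod_congr rfl fun r hr => ?_
      rw [content_succ]
      ring
    · intro a _ b _ h
      rw [Prod.ext_iff] at h
      simp at h
      exact Prod.ext h.1 h.2
  have hremY : (∏ r ∈ removables Y, (content s - content r - (eps1 + eps2)))
      = (-(eps1 + eps2)) * ∏ r ∈ (removables Y).erase s, (content s - content r - (eps1 + eps2)) := by
    rw [← Finset.mul_prod_erase _ _ hs]
    congr 1
    rw [sub_self, zero_sub]
  -- addability criteria for the two special boxes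
  have hb1cond : ((s.1 + 1, s.2) : ℕ × ℕ) ∈ addables Y ↔ (s.2 = 0 ∨ (s.1 + 1, s.2 - 1) ∈ Y.cells) := by
    rw [mem_addables_iff]
    simp only [Nat.add_sub_cancel]
    constructor
    · exact fun h => h.2.2
    · intro h
      exact ⟨hd1, Or.inr (by simpa using hsY), h⟩
  have hb2cond : ((s.1, s.2 + 1) : ℕ × ℕ) ∈ addables Y ↔ (s.1 = 0 ∨ (s.1 - 1, s.2 + 1) ∈ Y.cells) := by
    rw [mem_addables_iff]
    simp only [Nat.add_sub_cancel]
    constructor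
    · exact fun h => h.2.1
    · intro h
      exact ⟨hd2, h, Or.inr (by simpa using hsY)⟩
  -- content values
  have v1 : content s - content (s.1 + 1, s.2) = -eps1 := by
    have h := content_down (s.1, s.2)
    simp only [Prod.mk.eta] at h
    rw [h]
    ring
  have v2 : content s - content (s.1, s.2 + 1) = -eps2 := by
    have h := content_right (s.1, s.2)
    simp only [Prod.mk.eta] at h
    rw [h]
    ring
  -- the key product identity
  have hP2 : (∏ r ∈ removables Y', (content s - content r - (eps1 + eps2)))
      * (∏ a ∈ addables Y ∩ E, (content s - content a))
      = (∏ r ∈ (removables Y).erase s, (content s - content r - (eps1 + eps2))) * (eps1 * eps2) := by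
    by_cases hb1 : s.2 = 0 ∨ (s.1 + 1, s.2 - 1) ∈ Y.cells <;>
      by_cases hb2 : s.1 = 0 ∨ (s.1 - 1, s.2 + 1) ∈ Y.cells
    · -- both special boxes addable, no new removables
      have hR : removables Y' = (removables Y).erase s := by
        ext r
        rw [mem_removables' hs hY' r, Finset.mem_erase]
        constructor
        · rintro (⟨h1, h2⟩ | ⟨hj, rfl, hn⟩ | ⟨hi, rfl, hn⟩)
          · exact ⟨h2, h1⟩
          · rcases hb1 with h | h
            · omega
            · exact absurd h hn
          · rcases hb2 with h | h
            · omega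
            · exact absurd h hn
        · rintro ⟨h1, h2⟩
          exact Or.inl ⟨h2, h1⟩
      have hAE : addables Y ∩ E = E := by
        rw [Finset.inter_eq_right]
        intro a ha
        rw [hE, Finset.mem_insert, Finset.mem_singleton] at ha
        rcases ha with rfl | rfl
        · exact hb1cond.mpr hb1
        · exact hb2cond.mpr hb2
      rw [hR, hAE, hE, Finset.prod_pair hE12, v1, v2]
      ring
    · -- right box addable, new removable to the left
      push_neg at hb2
      have hnr2 : (s.1 - 1, s.2) ∉ (removables Y).erase s := by
        rw [Finset.mem_erase, mem_removables_iff]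
        rintro ⟨-, -, h, -⟩
        apply h
        simp only
        rw [show s.1 - 1 + 1 = s.1 from by omega]
        simpa using hsY
      have hv2' : content s - content (s.1 - 1, s.2) - (eps1 + eps2) = -eps2 := by
        have h := content_down' (s.1 - 1) s.2
        rw [show s.1 - 1 + 1 = s.1 from by omega] at h
        simp only [Prod.mk.eta] at h
        rw [h]
        ring
      have hR : removables Y' = insert (s.1 - 1, s.2) ((removables Y).erase s) := by
        ext r
        rw [mem_removables' hs hY' r, Finset.mem_insert, Finset.mem_erase]
        constructor
        · rintro (⟨h1, h2⟩ | ⟨hj, rfl, hn⟩ | ⟨hi, rfl, hn⟩)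
          · exact Or.inr ⟨h2, h1⟩
          · rcases hb1 with h | h
            · omega
            · exact absurd h hn
          · exact Or.inl rfl
        · rintro (rfl | ⟨h1, h2⟩)
          · exact Or.inr (Or.inr ⟨by omega, rfl, hb2.2⟩)
          · exact Or.inl ⟨h2, h1⟩
      have hAE : addables Y ∩ E = {(s.1 + 1, s.2)} := by
        ext a
        simp only [Finset.mem_inter, hE, Finset.mem_insert, Finset.mem_singleton]
        constructor
        · rintro ⟨hA, rfl | rfl⟩
          · rfl
          · exact absurd (hb2cond.mp hA) (by tauto)
        · rintro rfl
          exact ⟨hb1cond.mpr hb1, Or.inl rfl⟩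
      rw [hR, Finset.prod_insert hnr2, hAE, Finset.prod_singleton, hv2', v1]
      ring
    · -- down box addable, new removable above
      push_neg at hb1
      have hnr1 : (s.1, s.2 - 1) ∉ (removables Y).erase s := by
        rw [Finset.mem_erase, mem_removables_iff]
        rintro ⟨-, -, -, h⟩
        apply h
        simp only
        rw [show s.2 - 1 + 1 = s.2 from by omega]
        simpa using hsY
      have hv1' : content s - content (s.1, s.2 - 1) - (eps1 + eps2) = -eps1 := by
        have h := content_right' s.1 (s.2 - 1)
        rw [show s.2 - 1 + 1 = s.2 from by omega] at h
        simp only [Prod.mk.eta] at h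
        rw [h]
        ring
      have hR : removables Y' = insert (s.1, s.2 - 1) ((removables Y).erase s) := by
        ext r
        rw [mem_removables' hs hY' r, Finset.mem_insert, Finset.mem_erase]
        constructor
        · rintro (⟨h1, h2⟩ | ⟨hj, rfl, hn⟩ | ⟨hi, rfl, hn⟩)
          · exact Or.inr ⟨h2, h1⟩
          · exact Or.inl rfl
          · rcases hb2 with h | h
            · omega
            · exact absurd h hn
        · rintro (rfl | ⟨h1, h2⟩)
          · exact Or.inr (Or.inl ⟨by omega, rfl, hb1.2⟩)
          · exact Or.inl ⟨h2, h1⟩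
      have hAE : addables Y ∩ E = {(s.1, s.2 + 1)} := by
        ext a
        simp only [Finset.mem_inter, hE, Finset.mem_insert, Finset.mem_singleton]
        constructor
        · rintro ⟨hA, rfl | rfl⟩
          · exact absurd (hb1cond.mp hA) (by tauto)
          · rfl
        · rintro rfl
          exact ⟨hb2cond.mpr hb2, Or.inr rfl⟩
      rw [hR, Finset.prod_insert hnr1, hAE, Finset.prod_singleton, hv1', v2]
      ring
    · -- two new removables
      push_neg at hb1 hb2
      have hnr2 : (s.1 - 1, s.2) ∉ (removables Y).erase s := by
        rw [Finset.mem_erase, mem_removables_iff]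
        rintro ⟨-, -, h, -⟩
        apply h
        simp only
        rw [show s.1 - 1 + 1 = s.1 from by omega]
        simpa using hsY
      have hnr1 : (s.1, s.2 - 1) ∉ insert (s.1 - 1, s.2) ((removables Y).erase s) := by
        rw [Finset.mem_insert, Finset.mem_erase, mem_removables_iff]
        rintro (h | ⟨-, -, -, h⟩)
        · rw [Prod.ext_iff] at h
          simp at h
          omega
        · apply h
          simp only
          rw [show s.2 - 1 + 1 = s.2 from by omega]
          simpa using hsY
      have hv1' : content s - content (s.1, s.2 - 1) - (eps1 + eps2) = -eps1 := by
        have h := content_right' s.1 (s.2 - 1)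
        rw [show s.2 - 1 + 1 = s.2 from by omega] at h
        simp only [Prod.mk.eta] at h
        rw [h]
        ring
      have hv2' : content s - content (s.1 - 1, s.2) - (eps1 + eps2) = -eps2 := by
        have h := content_down' (s.1 - 1) s.2
        rw [show s.1 - 1 + 1 = s.1 from by omega] at h
        simp only [Prod.mk.eta] at h
        rw [h]
        ring
      have hR : removables Y' = insert (s.1, s.2 - 1) (insert (s.1 - 1, s.2) ((removables Y).erase s)) := by
        ext r
        rw [mem_removables' hs hY' r, Finset.mem_insert, Finset.mem_insert, Finset.mem_erase]
        constructor
        · rintro (⟨h1, h2⟩ | ⟨hj, rfl, hn⟩ | ⟨hi, rfl, hn⟩)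
          · exact Or.inr (Or.inr ⟨h2, h1⟩)
          · exact Or.inl rfl
          · exact Or.inr (Or.inl rfl)
        · rintro (rfl | rfl | ⟨h1, h2⟩)
          · exact Or.inr (Or.inl ⟨by omega, rfl, hb1.2⟩)
          · exact Or.inr (Or.inr ⟨by omega, rfl, hb2.2⟩)
          · exact Or.inl ⟨h2, h1⟩
      have hAE : addables Y ∩ E = ∅ := by
        ext a
        simp only [Finset.mem_inter, hE, Finset.mem_insert, Finset.mem_singleton]
        simp only [Finset.notMem_empty, iff_false]
        rintro ⟨hA, rfl | rfl⟩
        · exact absurd (hb1cond.mp hA) (by tauto)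
        · exact absurd (hb2cond.mp hA) (by tauto)
      rw [hR, Finset.prod_insert hnr1, Finset.prod_insert hnr2, hAE, Finset.prod_empty, mul_one,
        hv1', hv2']
      ring
  -- nonvanishing
  have hD : (∏ a ∈ addables Y \ E, (content s - content a)) ≠ 0 :=
    Finset.prod_ne_zero_iff.mpr fun a ha =>
      content_sub_ne fun h => hsA (h ▸ (Finset.mem_sdiff.mp ha).1)
  have hP : (∏ a ∈ addables Y ∩ E, (content s - content a)) ≠ 0 :=
    Finset.prod_ne_zero_iff.mpr fun a ha =>
      content_sub_ne fun h => hsA (h ▸ (Finset.mem_inter.mp ha).1)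
  -- finish
  simp only [tau]
  rw [herase, hout Y, hout Y', hremY, ← hsplit]
  rw [eq_div_iff hD]
  simp only [hbar]
  field_simp
  linear_combination (-1 : Kf) * hP2

end
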